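/- arXiv:1406.7855 — 2 statements merged into one kernel-verified Lean document; each statement's English description precedes it below -/
import Mathlib

section
/- Let p ≥ 2 and let f: {-1,1}^n → {-1,0,1} satisfy f̂(S) = 0 for all S with |S| < k. Then for all t > 0, E|P_t f|^p ≤ e^{-2tk}·E|f|^p. -/
/-- Expectation with respect to the uniform measure on `{-1,1}^n` (modeled by `Fin n → Bool`). -/
noncomputable def cubeE (n : ℕ) (f : (Fin n → Bool) → ℝ) : ℝ := (∑ x, f x) / 2 ^ n

/-- The Walsh character `W_S(x) = ∏_{i ∈ S} x_i`. -/
noncomputable def walsh (n : ℕ) (S : Finset (Fin n)) (x : Fin n → Bool) : ℝ :=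
  ∏ i ∈ S, (if x i then (1 : ℝ) else -1)

/-- Fourier coefficient `f̂(S) = E[f · W_S]`. -/
noncomputable def cubeCoeff (n : ℕ) (f : (Fin n → Bool) → ℝ) (S : Finset (Fin n)) : ℝ :=
  cubeE n fun x => f x * walsh n S x

/-- The heat semigroup `P_t f = ∑_S e^{-t|S|} f̂(S) W_S`. -/
noncomputable def heat (n : ℕ) (t : ℝ) (f : (Fin n → Bool) → ℝ) : (Fin n → Bool) → ℝ :=
  fun x => ∑ S : Finset (Fin n), Real.exp (-t * S.card) * cubeCoeff n f S * walsh n S x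

section aux

private lemma sq_eps (b : Bool) :
    (if b then (1:ℝ) else -1) * (if b then (1:ℝ) else -1) = 1 := by
  cases b <;> norm_num

/-- Multiplicativity: `W_S · W_T = W_{S Δ T}`. -/
lemma walsh_mul (n : ℕ) (S T : Finset (Fin n)) (x : Fin n → Bool) :
    walsh n S x * walsh n T x = walsh n (symmDiff S T) x := by
  unfold walsh
  rw [← Finset.prod_union_inter]
  have hU : S ∪ T = (symmDiff S T) ∪ (S ∩ T) := by
    ext i
    simp only [Finset.mem_union, Finset.mem_symmDiff, Finset.mem_inter]
    tauto
  have hd : Disjoint (symmDiff S T) (S ∩ T) := by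
    rw [Finset.disjoint_left]
    intro a ha h2
    simp only [Finset.mem_symmDiff] at ha
    simp only [Finset.mem_inter] at h2
    tauto
  rw [hU, Finset.prod_union hd, mul_assoc, ← Finset.prod_mul_distrib,
    Finset.prod_eq_one (fun i _ => sq_eps (x i)), mul_one]

set_option maxHeartbeats 1000000 in
/-- `∑_x W_S(x) = 2^n` if `S = ∅`, else `0`. -/
lemma sum_walsh (n : ℕ) (S : Finset (Fin n)) :
    ∑ x : Fin n → Bool, walsh n S x = if S = ∅ then (2:ℝ)^n else 0 := by
  have key := Finset.prod_univ_sum (fun _ : Fin n => (Finset.univ : Finset Bool))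
    (fun i b => if i ∈ S then (if b then (1:ℝ) else -1) else 1)
  rw [Fintype.piFinset_univ] at key
  have h1 : ∀ x : Fin n → Bool,
      walsh n S x = ∏ i : Fin n, (if i ∈ S then (if x i then (1:ℝ) else -1) else 1) := by
    intro x
    rw [walsh]
    rw [Finset.prod_ite_mem Finset.univ S, Finset.univ_inter]
  calc ∑ x : Fin n → Bool, walsh n S x
      = ∑ x : Fin n → Bool,
          ∏ i : Fin n, (if i ∈ S then (if x i then (1:ℝ) else -1) else 1) :=
        Finset.sum_congr rfl fun x _ => h1 x
    _ = ∏ i : Fin n, ∑ b : Bool, (if i ∈ S then (if b then (1:ℝ) else -1) else 1) := key.symm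
    _ = ∏ i : Fin n, (if i ∈ S then (0:ℝ) else 2) := by
        refine Finset.prod_congr rfl fun i _ => ?_
        by_cases h : i ∈ S <;> simp [h]
    _ = if S = ∅ then (2:ℝ)^n else 0 := by
        by_cases h : S = ∅
        · simp [h, Finset.prod_const, Finset.card_univ]
        · obtain ⟨i, hi⟩ := Finset.nonempty_iff_ne_empty.2 h
          simp only [h, if_false]
          exact Finset.prod_eq_zero (Finset.mem_univ i) (by simp [hi])

/-- Orthogonality of Walsh characters. -/
lemma sum_walsh_mul (n : ℕ) (S T : Finset (Fin n)) :
    ∑ x : Fin n → Bool, walsh n S x * walsh n T x = if S = T then (2:ℝ)^n else 0 := by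
  simp only [walsh_mul, sum_walsh]
  by_cases h : S = T
  · have : symmDiff S T = ∅ := by rw [← Finset.bot_eq_empty, symmDiff_eq_bot]; exact h
    simp [h, this]
  · have : symmDiff S T ≠ ∅ := fun hc =>
      h (symmDiff_eq_bot.1 (by rw [Finset.bot_eq_empty]; exact hc))
    simp [h, this]

/-- `∑_S ∏_{i∈S} g i = ∏_i (1 + g i)`. -/
lemma sum_prod_eq (n : ℕ) (g : Fin n → ℝ) :
    ∑ S : Finset (Fin n), ∏ i ∈ S, g i = ∏ i, (1 + g i) := by
  have h : (∏ i, (1 + g i)) = ∏ i, (g i + 1) :=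
    Finset.prod_congr rfl fun i _ => add_comm _ _
  rw [h, Finset.prod_add, Finset.powerset_univ]
  simp

/-- Product formula for the weighted kernel. -/
lemma sum_c_walsh (n : ℕ) (c : ℝ) (x y : Fin n → Bool) :
    ∑ S : Finset (Fin n), c ^ S.card * (walsh n S x * walsh n S y)
      = ∏ i, (1 + c * ((if x i then (1:ℝ) else -1) * (if y i then (1:ℝ) else -1))) := by
  rw [← sum_prod_eq]
  refine Finset.sum_congr rfl fun S _ => ?_
  rw [walsh, walsh, ← Finset.prod_mul_distrib,
    show c ^ S.card = ∏ _i ∈ S, c from (Finset.prod_const c).symm,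
    ← Finset.prod_mul_distrib]

lemma sum_walsh_walsh (n : ℕ) (x y : Fin n → Bool) :
    ∑ S : Finset (Fin n), walsh n S y * walsh n S x = if y = x then (2:ℝ)^n else 0 := by
  have h := sum_c_walsh n 1 y x
  simp only [one_pow, one_mul] at h
  rw [h]
  by_cases hxy : y = x
  · rw [if_pos hxy, hxy]
    have h2 : ∀ i : Fin n,
        (1 + (if x i then (1:ℝ) else -1) * (if x i then (1:ℝ) else -1)) = 2 := by
      intro i; rw [sq_eps]; norm_num
    rw [Finset.prod_congr rfl fun i _ => h2 i, Finset.prod_const, Finset.card_univ,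
      Fintype.card_fin]
  · rw [if_neg hxy]
    obtain ⟨i, hi⟩ := Function.ne_iff.1 hxy
    refine Finset.prod_eq_zero (Finset.mem_univ i) ?_
    revert hi
    cases y i <;> cases x i <;> simp

/-- Fourier inversion. -/
lemma cube_inversion (n : ℕ) (f : (Fin n → Bool) → ℝ) (x : Fin n → Bool) :
    f x = ∑ S : Finset (Fin n), cubeCoeff n f S * walsh n S x := by
  have twon : ((2:ℝ)^n) ≠ 0 := by positivity
  have h : ∑ S : Finset (Fin n), cubeCoeff n f S * walsh n S x
      = (∑ y, f y * ∑ S : Finset (Fin n), walsh n S y * walsh n S x) / 2^n := by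
    unfold cubeCoeff cubeE
    rw [show (∑ S : Finset (Fin n), (∑ y, f y * walsh n S y) / 2 ^ n * walsh n S x)
        = ∑ S : Finset (Fin n), (∑ y, f y * walsh n S y * walsh n S x) / 2 ^ n from
      Finset.sum_congr rfl fun S _ => by rw [div_mul_eq_mul_div, Finset.sum_mul]]
    rw [← Finset.sum_div]
    congr 1
    rw [Finset.sum_comm]
    refine Finset.sum_congr rfl fun y _ => ?_
    rw [Finset.mul_sum]
    exact Finset.sum_congr rfl fun S _ => by ring
  rw [h]
  simp only [sum_walsh_walsh, mul_ite, mul_zero]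
  rw [Finset.sum_ite_eq' Finset.univ x (fun y => f y * 2^n)]
  simp [twon]

/-- Expanding a square of a Walsh expansion. -/
lemma sum_sq_expansion (n : ℕ) (a : Finset (Fin n) → ℝ) :
    ∑ x : Fin n → Bool, (∑ S : Finset (Fin n), a S * walsh n S x) *
        (∑ S : Finset (Fin n), a S * walsh n S x)
      = (∑ S : Finset (Fin n), (a S)^2) * 2^n := by
  have h1 : ∀ x : Fin n → Bool,
      (∑ S : Finset (Fin n), a S * walsh n S x) * (∑ S : Finset (Fin n), a S * walsh n S x)
        = ∑ S : Finset (Fin n), ∑ T : Finset (Fin n),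
            (a S * a T) * (walsh n S x * walsh n T x) := by
    intro x
    rw [Finset.sum_mul_sum]
    exact Finset.sum_congr rfl fun S _ => Finset.sum_congr rfl fun T _ => by ring
  simp only [h1]
  rw [Finset.sum_comm]
  have h2 : ∀ S : Finset (Fin n),
      ∑ x : Fin n → Bool, ∑ T : Finset (Fin n), (a S * a T) * (walsh n S x * walsh n T x)
        = (a S)^2 * 2^n := by
    intro S
    rw [Finset.sum_comm]
    have h3 : ∀ T : Finset (Fin n),
        ∑ x : Fin n → Bool, (a S * a T) * (walsh n S x * walsh n T x)
          = (a S * a T) * (if S = T then (2:ℝ)^n else 0) := by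
      intro T
      rw [← Finset.mul_sum, sum_walsh_mul]
    simp only [h3, mul_ite, mul_zero]
    rw [Finset.sum_ite_eq Finset.univ S (fun T => a S * a T * 2^n)]
    simp [sq]
  simp only [h2]
  rw [← Finset.sum_mul]

/-- Parseval for `f` itself. -/
lemma cube_parseval (n : ℕ) (f : (Fin n → Bool) → ℝ) :
    cubeE n (fun x => f x * f x) = ∑ S : Finset (Fin n), (cubeCoeff n f S)^2 := by
  have twon : ((2:ℝ)^n) ≠ 0 := by positivity
  unfold cubeE
  have h : ∀ x, f x * f x = (∑ S : Finset (Fin n), cubeCoeff n f S * walsh n S x) *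
      (∑ S : Finset (Fin n), cubeCoeff n f S * walsh n S x) := by
    intro x; rw [← cube_inversion]
  simp only [h]
  rw [sum_sq_expansion, mul_div_assoc, div_self twon, mul_one]

lemma heat_sq (n : ℕ) (t : ℝ) (f : (Fin n → Bool) → ℝ) :
    cubeE n (fun x => heat n t f x * heat n t f x)
      = ∑ S : Finset (Fin n), (Real.exp (-t * S.card) * cubeCoeff n f S)^2 := by
  have twon : ((2:ℝ)^n) ≠ 0 := by positivity
  unfold cubeE heat
  rw [sum_sq_expansion, mul_div_assoc, div_self twon, mul_one]

/-- The kernel bound: `|P_t f x| ≤ 1` for `|f| ≤ 1`, `t > 0`. -/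
lemma heat_abs_le_one (n : ℕ) (t : ℝ) (ht : 0 < t) (f : (Fin n → Bool) → ℝ)
    (hf : ∀ x, |f x| ≤ 1) (x : Fin n → Bool) : |heat n t f x| ≤ 1 := by
  have twon : (0:ℝ) < (2:ℝ)^n := by positivity
  set K : (Fin n → Bool) → ℝ := fun y =>
    ∑ S : Finset (Fin n), Real.exp (-t * S.card) * (walsh n S x * walsh n S y) with hK
  have hexp : ∀ S : Finset (Fin n), Real.exp (-t * S.card) = (Real.exp (-t)) ^ S.card := by
    intro S
    rw [← Real.exp_nat_mul]
    congr 1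
    ring
  -- heat = average of f against K
  have hrep : heat n t f x = (∑ y, f y * K y) / 2^n := by
    unfold heat cubeCoeff cubeE
    have hterm : ∀ S : Finset (Fin n),
        Real.exp (-t * S.card) * ((∑ y, f y * walsh n S y) / 2^n) * walsh n S x
          = (∑ y, f y * (Real.exp (-t * S.card) * (walsh n S x * walsh n S y))) / 2^n := by
      intro S
      rw [show (∑ y, f y * (Real.exp (-t * S.card) * (walsh n S x * walsh n S y)))
          = ∑ y, (Real.exp (-t * S.card) * (f y * walsh n S y)) * walsh n S x from
        Finset.sum_congr rfl fun y _ => by ring]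
      rw [← Finset.sum_mul, ← Finset.mul_sum]
      ring
    simp only [hterm]
    rw [← Finset.sum_div]
    congr 1
    rw [Finset.sum_comm]
    refine Finset.sum_congr rfl fun y _ => ?_
    simp only [hK, Finset.mul_sum]
  -- K is nonneg
  have hKnonneg : ∀ y, 0 ≤ K y := by
    intro y
    rw [hK]
    simp only [hexp]
    rw [sum_c_walsh]
    refine Finset.prod_nonneg fun i _ => ?_
    have h1 : Real.exp (-t) ≤ 1 := Real.exp_le_one_iff.2 (by linarith)
    have h2 : (0:ℝ) < Real.exp (-t) := Real.exp_pos _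
    cases x i <;> cases y i <;> simp <;> nlinarith
  -- total mass of K
  have hKsum : ∑ y, K y = 2^n := by
    rw [hK]
    rw [Finset.sum_comm]
    have h4 : ∀ S : Finset (Fin n),
        ∑ y : Fin n → Bool, Real.exp (-t * S.card) * (walsh n S x * walsh n S y)
          = Real.exp (-t * S.card) * (walsh n S x * (if S = ∅ then (2:ℝ)^n else 0)) := by
      intro S
      rw [← Finset.mul_sum, ← Finset.mul_sum, sum_walsh]
    simp only [h4, mul_ite, mul_zero]
    rw [Finset.sum_ite_eq' Finset.univ (∅ : Finset (Fin n))]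
    simp [walsh]
  rw [hrep, abs_div, abs_of_pos twon, div_le_one twon]
  calc |∑ y, f y * K y| ≤ ∑ y, |f y * K y| := Finset.abs_sum_le_sum_abs _ _
    _ ≤ ∑ y, K y := by
        refine Finset.sum_le_sum fun y _ => ?_
        rw [abs_mul, abs_of_nonneg (hKnonneg y)]
        calc |f y| * K y ≤ 1 * K y := mul_le_mul_of_nonneg_right (hf y) (hKnonneg y)
          _ = K y := one_mul _
    _ = 2^n := hKsum

end aux

theorem stmt_12 (n k : ℕ) (p : ℝ) (hp : 2 ≤ p)
    (f : (Fin n → Bool) → ℝ) (hval : ∀ x, f x = -1 ∨ f x = 0 ∨ f x = 1)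
    (hcoeff : ∀ S : Finset (Fin n), S.card < k → cubeCoeff n f S = 0)
    (t : ℝ) (ht : 0 < t) :
    cubeE n (fun x => |heat n t f x| ^ p) ≤
      Real.exp (-2 * t * k) * cubeE n (fun x => |f x| ^ p) := by
  have hp0 : p ≠ 0 := by positivity
  have twon : (0:ℝ) < (2:ℝ)^n := by positivity
  have hfabs : ∀ x, |f x| ≤ 1 := by
    intro x; rcases hval x with h | h | h <;> rw [h] <;> norm_num
  have hheat := heat_abs_le_one n t ht f hfabs
  -- pointwise |heat|^p ≤ heat * heat
  have hpt : ∀ x, |heat n t f x| ^ p ≤ heat n t f x * heat n t f x := by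
    intro x
    have h2 : |heat n t f x| ^ (2:ℝ) = heat n t f x * heat n t f x := by
      rw [Real.rpow_two, sq_abs, sq]
    rcases eq_or_lt_of_le (abs_nonneg (heat n t f x)) with h0 | h0
    · rw [← h2, ← h0, Real.zero_rpow hp0, Real.zero_rpow (by norm_num)]
    · rw [← h2]
      exact Real.rpow_le_rpow_of_exponent_ge h0 (hheat x) hp
  have hmono : cubeE n (fun x => |heat n t f x| ^ p)
      ≤ cubeE n (fun x => heat n t f x * heat n t f x) := by
    unfold cubeE
    gcongr
    exact hpt _
  refine hmono.trans ?_
  have hfp : ∀ x, |f x| ^ p = f x * f x := by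
    intro x
    rcases hval x with h | h | h <;> rw [h] <;>
      simp [Real.zero_rpow hp0, Real.one_rpow, abs_of_nonneg]
  have hre : cubeE n (fun x => |f x| ^ p) = cubeE n (fun x => f x * f x) := by
    unfold cubeE; congr 1; exact Finset.sum_congr rfl fun x _ => hfp x
  rw [hre, heat_sq, cube_parseval, Finset.mul_sum]
  refine Finset.sum_le_sum fun S _ => ?_
  by_cases hS : S.card < k
  · rw [hcoeff S hS]; simp
  · push_neg at hS
    have h1 : (Real.exp (-t * S.card) * cubeCoeff n f S)^2
        = Real.exp (-2 * t * S.card) * (cubeCoeff n f S)^2 := by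
      rw [mul_pow, sq (Real.exp (-t * S.card)), ← Real.exp_add,
        show (-t * (S.card:ℝ)) + (-t * S.card) = -2 * t * S.card from by ring]
    rw [h1]
    have hk : (k:ℝ) ≤ S.card := Nat.cast_le.2 hS
    have h2 : Real.exp (-2 * t * S.card) ≤ Real.exp (-2 * t * k) := by
      apply Real.exp_le_exp.2
      nlinarith
    exact mul_le_mul_of_nonneg_right h2 (sq_nonneg _)
end

section
/- For all real numbers a, b and all p ∈ (1,∞): (p-2)²·(|a|^p + |b|^p) + 8(p-1)·φ_{p/2}(a)·φ_{p/2}(b) ≥ p²·(a·φ_{p-1}(b) + φ_{p-1}(a)·b), where φ_s(x) = sign(x)|x|^s. -/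
/-- `φ_s(x) = sign(x) · |x|^s`. -/
noncomputable def phi (s x : ℝ) : ℝ := Real.sign x * |x| ^ s

open Real

lemma sinh_mul_le_aux {r : ℝ} (hr0 : 0 ≤ r) (hr1 : r ≤ 1) {X : ℝ} (hX : 0 ≤ X) :
    Real.sinh (r * X) ≤ r * Real.sinh X := by
  set f : ℝ → ℝ := fun x => r * Real.sinh x - Real.sinh (r * x) with hf
  have hderiv : ∀ x : ℝ, HasDerivAt f (r * Real.cosh x - Real.cosh (r * x) * r) x := by
    intro x
    have h1 : HasDerivAt (fun x : ℝ => r * Real.sinh x) (r * Real.cosh x) x :=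
      (Real.hasDerivAt_sinh x).const_mul r
    have h2 : HasDerivAt (fun x : ℝ => Real.sinh (r * x)) (Real.cosh (r * x) * r) x := by
      have hid : HasDerivAt (fun x : ℝ => r * x) r x := by
        simpa using (hasDerivAt_id x).const_mul r
      exact (Real.hasDerivAt_sinh (r * x)).comp x hid
    exact h1.sub h2
  have hmono : MonotoneOn f (Set.Ici (0:ℝ)) := by
    apply monotoneOn_of_deriv_nonneg (convex_Ici 0)
    · exact ((continuous_const.mul Real.continuous_sinh).sub
        (Real.continuous_sinh.comp (continuous_const.mul continuous_id))).continuousOn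
    · intro x _
      exact (hderiv x).differentiableAt.differentiableWithinAt
    · intro x hx
      rw [interior_Ici, Set.mem_Ioi] at hx
      rw [(hderiv x).deriv]
      have hc : Real.cosh (r * x) ≤ Real.cosh x := by
        rw [Real.cosh_le_cosh]
        rw [abs_of_nonneg (mul_nonneg hr0 hx.le), abs_of_pos hx]
        nlinarith
      nlinarith
  have h0 : f 0 = 0 := by simp [hf]
  have := hmono Set.self_mem_Ici (Set.mem_Ici.2 hX) hX
  rw [h0] at this
  simp only [hf] at this
  linarith

lemma sinh_homog {c d t : ℝ} (hc : 0 ≤ c) (hcd : c ≤ d) (ht : 0 ≤ t) :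
    d * Real.sinh (c * t) ≤ c * Real.sinh (d * t) := by
  rcases eq_or_lt_of_le (hc.trans hcd) with hd | hd
  · have hc0 : c = 0 := le_antisymm (hcd.trans hd.symm.le) hc
    simp [← hd, hc0]
  · have hr0 : 0 ≤ c / d := div_nonneg hc hd.le
    have hr1 : c / d ≤ 1 := (div_le_one hd).2 hcd
    have hX : 0 ≤ d * t := mul_nonneg hd.le ht
    have h := sinh_mul_le_aux hr0 hr1 hX
    have harg : c / d * (d * t) = c * t := by field_simp
    rw [harg] at h
    have := mul_le_mul_of_nonneg_left h hd.le
    calc d * Real.sinh (c * t) ≤ d * (c / d * Real.sinh (d * t)) := this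
      _ = c * Real.sinh (d * t) := by field_simp

lemma cosh_sub_one (x : ℝ) : Real.cosh x - 1 = 2 * Real.sinh (x / 2) ^ 2 := by
  rw [Real.cosh_eq, Real.sinh_eq]
  have h1 : Real.exp (x/2) * Real.exp (x/2) = Real.exp x := by
    rw [← Real.exp_add]; norm_num
  have h2 : Real.exp (-(x/2)) * Real.exp (-(x/2)) = Real.exp (-x) := by
    rw [← Real.exp_add]; congr 1; ring
  have h3 : Real.exp (x/2) * Real.exp (-(x/2)) = 1 := by
    rw [← Real.exp_add]; norm_num
  nlinarith [h1, h2, h3]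

lemma keyK {p : ℝ} (hp : 1 < p) (s : ℝ) :
    p ^ 2 * (Real.cosh ((p - 2) * s) - 1) ≤ (p - 2) ^ 2 * (Real.cosh (p * s) - 1) := by
  have hp0 : (0:ℝ) < p := by linarith
  have habs1 : Real.cosh ((p - 2) * s) = Real.cosh (|p - 2| * |s|) := by
    rw [← abs_mul, Real.cosh_abs]
  have habs2 : Real.cosh (p * s) = Real.cosh (p * |s|) := by
    rw [← Real.cosh_abs, abs_mul, abs_of_pos hp0]
  rw [habs1, habs2, cosh_sub_one, cosh_sub_one]
  rw [mul_div_assoc, mul_div_assoc]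
  set t : ℝ := |s| / 2 with hts
  have ht : 0 ≤ t := by positivity
  have hcd : |p - 2| ≤ p := by
    rcases abs_cases (p - 2) with ⟨h, _⟩ | ⟨h, _⟩ <;> rw [h] <;> linarith
  have h1 : p * Real.sinh (|p - 2| * t) ≤ |p - 2| * Real.sinh (p * t) :=
    sinh_homog (abs_nonneg _) hcd ht
  have hA : 0 ≤ Real.sinh (|p - 2| * t) := by
    rw [Real.sinh_nonneg_iff]; positivity
  have hB : 0 ≤ Real.sinh (p * t) := by
    rw [Real.sinh_nonneg_iff]; positivity
  nlinarith [h1, hA, hB, sq_abs (p - 2), mul_nonneg hp0.le hA]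

lemma key_exp {p : ℝ} (hp : 1 < p) (L M : ℝ) :
    p ^ 2 * (Real.exp L * Real.exp (M * (p - 1)) + Real.exp (L * (p - 1)) * Real.exp M) ≤
      (p - 2) ^ 2 * (Real.exp (L * p) + Real.exp (M * p)) +
        8 * (p - 1) * (Real.exp (L * (p / 2)) * Real.exp (M * (p / 2))) := by
  set s : ℝ := (L - M) / 2 with hs
  set m : ℝ := p * (L + M) / 2 with hm
  have h1 : Real.exp L * Real.exp (M * (p - 1)) = Real.exp m * Real.exp (-((p - 2) * s)) := by
    rw [← Real.exp_add, ← Real.exp_add]; congr 1; rw [hs, hm]; ring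
  have h2 : Real.exp (L * (p - 1)) * Real.exp M = Real.exp m * Real.exp ((p - 2) * s) := by
    rw [← Real.exp_add, ← Real.exp_add]; congr 1; rw [hs, hm]; ring
  have h3 : Real.exp (L * p) = Real.exp m * Real.exp (p * s) := by
    rw [← Real.exp_add]; congr 1; rw [hs, hm]; ring
  have h4 : Real.exp (M * p) = Real.exp m * Real.exp (-(p * s)) := by
    rw [← Real.exp_add]; congr 1; rw [hs, hm]; ring
  have h5 : Real.exp (L * (p / 2)) * Real.exp (M * (p / 2)) = Real.exp m := by
    rw [← Real.exp_add]; congr 1; rw [hm]; ring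
  rw [h1, h2, h3, h4, h5]
  have hK := keyK hp s
  have hE : (0:ℝ) < Real.exp m := Real.exp_pos m
  have c1 : Real.exp ((p - 2) * s) + Real.exp (-((p - 2) * s)) = 2 * Real.cosh ((p - 2) * s) := by
    rw [Real.cosh_eq]; ring
  have c2 : Real.exp (p * s) + Real.exp (-(p * s)) = 2 * Real.cosh (p * s) := by
    rw [Real.cosh_eq]; ring
  have main : p ^ 2 * (2 * Real.cosh ((p - 2) * s)) ≤
      (p - 2) ^ 2 * (2 * Real.cosh (p * s)) + 8 * (p - 1) := by nlinarith [hK]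
  have lhs_eq : p ^ 2 * (Real.exp m * Real.exp (-((p - 2) * s)) +
      Real.exp m * Real.exp ((p - 2) * s)) =
      Real.exp m * (p ^ 2 * (2 * Real.cosh ((p - 2) * s))) := by
    rw [← c1]; ring
  have rhs_eq : (p - 2) ^ 2 * (Real.exp m * Real.exp (p * s) + Real.exp m * Real.exp (-(p * s))) +
      8 * (p - 1) * Real.exp m =
      Real.exp m * ((p - 2) ^ 2 * (2 * Real.cosh (p * s)) + 8 * (p - 1)) := by
    rw [← c2]; ring
  rw [lhs_eq, rhs_eq]
  exact mul_le_mul_of_nonneg_left main hE.le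

lemma key1 {p : ℝ} (hp : 1 < p) {x y : ℝ} (hx : 0 ≤ x) (hy : 0 ≤ y) :
    p ^ 2 * (x * y ^ (p - 1) + x ^ (p - 1) * y) ≤
      (p - 2) ^ 2 * (x ^ p + y ^ p) + 8 * (p - 1) * (x ^ (p / 2) * y ^ (p / 2)) := by
  have hp0 : (0:ℝ) < p := by linarith
  rcases hx.eq_or_lt with hx0 | hx0
  · rw [← hx0]
    rw [Real.zero_rpow (by linarith : p - 1 ≠ 0), Real.zero_rpow hp0.ne',
      Real.zero_rpow (by positivity : p / 2 ≠ 0)]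
    have : 0 ≤ y ^ p := Real.rpow_nonneg hy p
    nlinarith [sq_nonneg (p - 2)]
  rcases hy.eq_or_lt with hy0 | hy0
  · rw [← hy0]
    rw [Real.zero_rpow (by linarith : p - 1 ≠ 0), Real.zero_rpow hp0.ne',
      Real.zero_rpow (by positivity : p / 2 ≠ 0)]
    have : 0 ≤ x ^ p := Real.rpow_nonneg hx p
    nlinarith [sq_nonneg (p - 2)]
  · rw [← Real.exp_log hx0, ← Real.exp_log hy0]
    simp only [← Real.exp_mul]
    exact key_exp hp _ _

lemma key2 {p : ℝ} (hp : 1 < p) {x y : ℝ} (hx : 0 ≤ x) (hy : 0 ≤ y) :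
    8 * (p - 1) * (x ^ (p / 2) * y ^ (p / 2)) ≤
      (p - 2) ^ 2 * (x ^ p + y ^ p) + p ^ 2 * (x * y ^ (p - 1) + x ^ (p - 1) * y) := by
  have hp0 : (0:ℝ) < p := by linarith
  have hux : x ^ p = x ^ (p / 2) * x ^ (p / 2) :=
    Real.rpow_of_add_eq hx hp0.ne' (by ring)
  have huy : y ^ p = y ^ (p / 2) * y ^ (p / 2) :=
    Real.rpow_of_add_eq hy hp0.ne' (by ring)
  have hvx : x * x ^ (p - 1) = x ^ p := by
    rw [Real.rpow_of_add_eq hx hp0.ne' (show 1 + (p - 1) = p by ring), Real.rpow_one]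
  have hvy : y * y ^ (p - 1) = y ^ p := by
    rw [Real.rpow_of_add_eq hy hp0.ne' (show 1 + (p - 1) = p by ring), Real.rpow_one]
  set a := x * y ^ (p - 1) with hadef
  set b := x ^ (p - 1) * y with hbdef
  set c := x ^ (p / 2) * y ^ (p / 2) with hcdef
  have ha : 0 ≤ a := mul_nonneg hx (Real.rpow_nonneg hy _)
  have hb : 0 ≤ b := mul_nonneg (Real.rpow_nonneg hx _) hy
  have hc : 0 ≤ c := mul_nonneg (Real.rpow_nonneg hx _) (Real.rpow_nonneg hy _)
  have hab : a * b = c ^ 2 := by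
    rw [hadef, hbdef, hcdef]
    have : x * y ^ (p - 1) * (x ^ (p - 1) * y) = (x * x ^ (p - 1)) * (y * y ^ (p - 1)) := by ring
    rw [this, hvx, hvy, hux, huy]; ring
  have am1 : 2 * c ≤ x ^ p + y ^ p := by
    rw [hux, huy, hcdef]
    nlinarith [sq_nonneg (x ^ (p / 2) - y ^ (p / 2))]
  have am2 : 2 * c ≤ a + b := by
    nlinarith [sq_nonneg (a - b), hab, hc, ha, hb, sq_nonneg (a + b - 2 * c)]
  nlinarith [mul_le_mul_of_nonneg_left am1 (sq_nonneg (p - 2)),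
    mul_le_mul_of_nonneg_left am2 (by positivity : (0:ℝ) ≤ p ^ 2),
    mul_nonneg (sq_nonneg (p - 2)) hc]

lemma phi_of_nonneg {s x : ℝ} (hs : 0 < s) (hx : 0 ≤ x) : phi s x = x ^ s := by
  rcases hx.eq_or_lt with h | h
  · simp [phi, ← h, Real.zero_rpow hs.ne']
  · simp [phi, Real.sign_of_pos h, abs_of_pos h]

lemma phi_of_nonpos {s x : ℝ} (hs : 0 < s) (hx : x ≤ 0) : phi s x = -((-x) ^ s) := by
  rcases hx.lt_or_eq with h | h
  · simp [phi, Real.sign_of_neg h, abs_of_neg h]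
  · simp [phi, h, Real.zero_rpow hs.ne']

theorem stmt_15 (p : ℝ) (hp : 1 < p) (a b : ℝ) :
    p ^ 2 * (a * phi (p - 1) b + phi (p - 1) a * b) ≤
      (p - 2) ^ 2 * (|a| ^ p + |b| ^ p) + 8 * (p - 1) * (phi (p / 2) a * phi (p / 2) b) := by
  have hp1 : (0:ℝ) < p - 1 := by linarith
  have hp2 : (0:ℝ) < p / 2 := by linarith
  rcases le_total 0 a with ha | ha <;> rcases le_total 0 b with hb | hb
  · rw [phi_of_nonneg hp1 ha, phi_of_nonneg hp1 hb, phi_of_nonneg hp2 ha,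
      phi_of_nonneg hp2 hb, abs_of_nonneg ha, abs_of_nonneg hb]
    exact key1 hp ha hb
  · rw [phi_of_nonneg hp1 ha, phi_of_nonpos hp1 hb, phi_of_nonneg hp2 ha,
      phi_of_nonpos hp2 hb, abs_of_nonneg ha, abs_of_nonpos hb]
    have h := key2 hp ha (neg_nonneg.2 hb)
    linarith
  · rw [phi_of_nonpos hp1 ha, phi_of_nonneg hp1 hb, phi_of_nonpos hp2 ha,
      phi_of_nonneg hp2 hb, abs_of_nonpos ha, abs_of_nonneg hb]
    have h := key2 hp (neg_nonneg.2 ha) hb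
    linarith
  · rw [phi_of_nonpos hp1 ha, phi_of_nonpos hp1 hb, phi_of_nonpos hp2 ha,
      phi_of_nonpos hp2 hb, abs_of_nonpos ha, abs_of_nonpos hb]
    have h := key1 hp (neg_nonneg.2 ha) (neg_nonneg.2 hb)
    linarith
end
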